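/- Each 4-valent melonic bubble b satisfies max_{r∈ℛ₂(b)} ω(r) = 4, i.e. its bubble dimension is d̃_b = −2; as a consequence, 4-valent melonic interactions are not power-counting renormalizable in this rank-4 model. -/

import Mathlib

/-!  Rank-4 tensorial bubbles and Feynman graphs, following
Carrozza–Lahoche–Oriti, "Renormalizable Group Field Theory beyond melonic
diagrams: an example in rank four". -/

open Finset

/-- A rank-4 bubble: a connected bipartite 4-colored regular graph, given by
finite sets of black and white nodes together with, for each color, a perfect
matching (bijection) between black and white nodes. -/
structure Bubble where
  B : Type
  W : Type
  [fB : Fintype B]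
  [fW : Fintype W]
  [dB : DecidableEq B]
  [dW : DecidableEq W]
  /-- for each color `i`, the perfect matching of color `i` -/
  edge : Fin 4 → B ≃ W
  /-- connectedness: the only subsets of nodes closed under colored adjacency
  are `∅` and `univ` -/
  conn : ∀ S : Finset (B ⊕ W),
    (∀ x ∈ S, ∀ y : B ⊕ W,
      (∃ i : Fin 4, (∃ u : B, x = Sum.inl u ∧ y = Sum.inr (edge i u)) ∨
        (∃ u : B, y = Sum.inl u ∧ x = Sum.inr (edge i u))) → y ∈ S) →
    S = ∅ ∨ S = Finset.univ

attribute [instance] Bubble.fB Bubble.fW Bubble.dB Bubble.dW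

/-- The valency of a bubble: its total number of nodes. -/
def Bubble.valency (b : Bubble) : ℕ := Fintype.card b.B + Fintype.card b.W

/-- Isomorphism of bubbles (color-preserving). -/
def Bubble.Iso (b b' : Bubble) : Prop :=
  ∃ (eB : b.B ≃ b'.B) (eW : b.W ≃ b'.W), ∀ (i : Fin 4) (x : b.B),
    eW (b.edge i x) = b'.edge i (eB x)

/-- The elementary 2-valent bubble. -/
def twoValent : Bubble where
  B := PUnit
  W := PUnit
  edge := fun _ => Equiv.refl PUnit
  conn := by
    intro S hS
    by_cases h : S = ∅
    · exact Or.inl h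
    · right
      obtain ⟨x, hx⟩ := Finset.nonempty_iff_ne_empty.mpr h
      have hother : ∀ z ∈ S, ∀ y : PUnit.{1} ⊕ PUnit.{1}, y ∈ S := by
        intro z hz y
        rcases z with ⟨⟩ | ⟨⟩ <;> rcases y with ⟨⟩ | ⟨⟩
        · exact hz
        · exact hS _ hz _ ⟨0, Or.inl ⟨PUnit.unit, rfl, rfl⟩⟩
        · exact hS _ hz _ ⟨0, Or.inr ⟨PUnit.unit, rfl, rfl⟩⟩
        · exact hz
      exact Finset.eq_univ_of_forall (hother x hx)

/-- The elementary necklace in which color `1` (index `0`) is paired with the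
color of index `ℓ.succ`, `ℓ : Fin 3`: its four nodes form a 4-cycle along which
double lines with the colors `{0, ℓ.succ}` alternate with double lines carrying
the complementary pair of colors. -/
def elemNecklace (ℓ : Fin 3) : Bubble where
  B := Fin 2
  W := Fin 2
  edge := fun c => if c = 0 ∨ c = ℓ.succ then Equiv.refl (Fin 2) else Equiv.swap 0 1
  conn := by fin_cases ℓ <;> decide

/-- The 4-valent melonic bubble of color `ℓ`. -/
def melon4 (ℓ : Fin 4) : Bubble where
  B := Fin 2
  W := Fin 2
  edge := fun c => if c = ℓ then Equiv.swap 0 1 else Equiv.refl (Fin 2)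
  conn := by fin_cases ℓ <;> decide

/-- The colored matchings of the connected sum of `b₁` and `b₂` at a black node
`n₁` of `b₁` and a white node `n₂` of `b₂`: delete `n₁, n₂` and join the
dangling colored half-lines according to their colors. -/
def connSumEdge (b₁ b₂ : Bubble) (n₁ : b₁.B) (n₂ : b₂.W) (i : Fin 4) :
    ({x : b₁.B // x ≠ n₁} ⊕ b₂.B) → (b₁.W ⊕ {y : b₂.W // y ≠ n₂})
  | Sum.inl x => Sum.inl (b₁.edge i x.1)
  | Sum.inr y =>
      if h : b₂.edge i y = n₂ then Sum.inl (b₁.edge i n₁)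
      else Sum.inr ⟨b₂.edge i y, h⟩

/-- `b₃` is the connected sum of `b₁` and `b₂` at `n₁` and `n₂`. -/
def IsConnSumAt (b₃ b₁ b₂ : Bubble) (n₁ : b₁.B) (n₂ : b₂.W) : Prop :=
  ∃ (eB : b₃.B ≃ ({x : b₁.B // x ≠ n₁} ⊕ b₂.B))
    (eW : b₃.W ≃ (b₁.W ⊕ {y : b₂.W // y ≠ n₂})),
    ∀ (i : Fin 4) (x : b₃.B), eW (b₃.edge i x) = connSumEdge b₁ b₂ n₁ n₂ i (eB x)

/-- The set `𝔹` of necklace bubbles: the 2-valent bubble together with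
everything generated by the three elementary necklaces under connected sums. -/
inductive IsNecklace : Bubble → Prop
  | two {b : Bubble} : b.Iso twoValent → IsNecklace b
  | elem {b : Bubble} (ℓ : Fin 3) : b.Iso (elemNecklace ℓ) → IsNecklace b
  | sum {b b₁ b₂ : Bubble} (n₁ : b₁.B) (n₂ : b₂.W) :
      IsNecklace b₁ → IsNecklace b₂ → IsConnSumAt b b₁ b₂ n₁ n₂ → IsNecklace b

/-- `(n, m)` is a `k`-dipole of the bubble `b`: `n` and `m` are joined by
exactly `k` colored lines. -/
def Bubble.IsDipole (b : Bubble) (n : b.B) (m : b.W) (k : ℕ) : Prop :=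
  (Finset.univ.filter fun i : Fin 4 => b.edge i n = m).card = k

/-- The colored matchings of the bubble obtained from `b` by contracting the
pair of nodes `(n, m)`: delete `n`, `m` and all colored lines between them, and
reconnect the dangling colored half-lines according to their colors. -/
def contractEdge (b : Bubble) (n : b.B) (m : b.W) (i : Fin 4)
    (x : {x : b.B // x ≠ n}) : {y : b.W // y ≠ m} :=
  if h : b.edge i x.1 = m then
    ⟨b.edge i n, fun hm => x.2 ((b.edge i).injective (h.trans hm.symm))⟩
  else ⟨b.edge i x.1, h⟩

/-- `b'` is the bubble obtained from `b` by contracting the dipole `(n, m)`. -/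
def Bubble.IsContractionAt (b' b : Bubble) (n : b.B) (m : b.W) : Prop :=
  ∃ (eB : b'.B ≃ {x : b.B // x ≠ n}) (eW : b'.W ≃ {y : b.W // y ≠ m}),
    ∀ (i : Fin 4) (x : b'.B), eW (b'.edge i x) = contractEdge b n m i (eB x)

/-- A Feynman graph: a finite collection of bubbles (the vertices) together
with 0-lines, each joining a black node to a white node, every node being
incident to at most one 0-line. Nodes not incident to a 0-line carry external
legs. -/
structure FGraph where
  V : Type
  [fV : Fintype V]
  [dV : DecidableEq V]
  bub : V → Bubble
  L : Type
  [fL : Fintype L]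
  [dL : DecidableEq L]
  /-- the black endpoint of a 0-line -/
  lb : L → Σ v : V, (bub v).B
  /-- the white endpoint of a 0-line -/
  lw : L → Σ v : V, (bub v).W
  lb_inj : Function.Injective lb
  lw_inj : Function.Injective lw

attribute [instance] FGraph.fV FGraph.dV FGraph.fL FGraph.dL

/-- The black nodes of a Feynman graph. -/
abbrev FGraph.NB (G : FGraph) : Type := Σ v : G.V, (G.bub v).B

/-- The white nodes of a Feynman graph. -/
abbrev FGraph.NW (G : FGraph) : Type := Σ v : G.V, (G.bub v).W

/-- The colored line of color `i` leaving the black node `x`. -/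
def FGraph.colorMap (G : FGraph) (i : Fin 4) (x : G.NB) : G.NW :=
  ⟨x.1, (G.bub x.1).edge i x.2⟩

/-- `L(𝒢)`: the number of 0-lines. -/
def FGraph.numL (G : FGraph) : ℕ := Fintype.card G.L

/-- `V(𝒢)`: the number of vertices (bubbles). -/
def FGraph.numV (G : FGraph) : ℕ := Fintype.card G.V

/-- `N(𝒢)`: the number of external legs. -/
def FGraph.numN (G : FGraph) : ℕ :=
  (Fintype.card G.NB - Fintype.card G.L) + (Fintype.card G.NW - Fintype.card G.L)

/-- `l'` is the successor of `l` in the face of color `i`: the white endpoint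
of `l'` is joined by a color-`i` line to the black endpoint of `l`. -/
def FGraph.NextRel (G : FGraph) (i : Fin 4) (l l' : G.L) : Prop :=
  G.lw l' = G.colorMap i (G.lb l)

/-- `C` is (the set of 0-lines of) an internal face of color `i`: a cycle of
the successor relation, i.e. a minimal nonempty set in which every 0-line has
its successor. -/
def FGraph.IsFace (G : FGraph) (i : Fin 4) (C : Finset G.L) : Prop :=
  C.Nonempty ∧ (∀ l ∈ C, ∃ l' ∈ C, G.NextRel i l l') ∧
    ∀ D : Finset G.L, D ⊆ C → D.Nonempty →
      (∀ l ∈ D, ∃ l' ∈ D, G.NextRel i l l') → D = C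

/-- `F(𝒢)`: the number of internal faces. -/
noncomputable def FGraph.numF (G : FGraph) : ℕ :=
  Set.ncard {p : Fin 4 × Finset G.L | G.IsFace p.1 p.2}

open Classical in
/-- The line/face incidence matrix `ε`, with internal faces coherently oriented
so that every 0-line occurs in a face it belongs to with matching
orientation. -/
noncomputable def FGraph.epsMat (G : FGraph) :
    Matrix G.L (Fin 4 × Finset G.L) ℚ :=
  fun l p => if G.IsFace p.1 p.2 ∧ l ∈ p.2 then 1 else 0

/-- `R(𝒢)`: the rank of the incidence matrix `ε` over `ℚ`. -/
noncomputable def FGraph.numR (G : FGraph) : ℕ := G.epsMat.rank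

/-- The Abelian degree of divergence `ω(𝒢) = -2L + 3(F - R)`. -/
noncomputable def FGraph.omega (G : FGraph) : ℤ :=
  -2 * (G.numL : ℤ) + 3 * ((G.numF : ℤ) - (G.numR : ℤ))

/-- `ρ(𝒢) = (L - V + 1) - (F - R)`. -/
noncomputable def FGraph.rho (G : FGraph) : ℤ :=
  ((G.numL : ℤ) - (G.numV : ℤ) + 1) - ((G.numF : ℤ) - (G.numR : ℤ))

/-- Adjacency of the vertices `a, b` through a 0-line belonging to `T`. -/
def FGraph.VAdjOn (G : FGraph) (T : Finset G.L) (a b : G.V) : Prop :=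
  ∃ l ∈ T, ((G.lb l).1 = a ∧ (G.lw l).1 = b) ∨ ((G.lb l).1 = b ∧ (G.lw l).1 = a)

/-- Adjacency of the vertices `a, b` through some 0-line. -/
def FGraph.VAdj (G : FGraph) (a b : G.V) : Prop :=
  ∃ l : G.L, ((G.lb l).1 = a ∧ (G.lw l).1 = b) ∨ ((G.lb l).1 = b ∧ (G.lw l).1 = a)

/-- Connectedness of a Feynman graph. -/
def FGraph.Connected (G : FGraph) : Prop :=
  Nonempty G.V ∧ ∀ v v' : G.V, Relation.ReflTransGen G.VAdj v v'

/-- `T` is a spanning tree of 0-lines of `𝒢`. -/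
def FGraph.IsSpanningTree (G : FGraph) (T : Finset G.L) : Prop :=
  T.card + 1 = Fintype.card G.V ∧
    ∀ v v' : G.V, Relation.ReflTransGen (G.VAdjOn T) v v'

/-- Rerouting of a color-`i` half-line through the contracted lines `T`:
as long as the reached white node is an endpoint of a contracted line, jump to
the color-`i` line leaving the black endpoint of that contracted line. -/
noncomputable def FGraph.reroute (G : FGraph) (T : Finset G.L) (i : Fin 4) :
    ℕ → G.NW → G.NW
  | 0, w => w
  | fuel + 1, w =>
      if h : ∃ l ∈ T, G.lw l = w then
        G.reroute T i fuel (G.colorMap i (G.lb h.choose))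
      else w

/-- `G'` is the Feynman graph obtained from `G` by contracting all the 0-lines
of `T` (deleting their end nodes and the colored lines between them, and
reconnecting the dangling colored half-lines by colors). -/
def FGraph.IsQuotientBy (G' G : FGraph) (T : Finset G.L) : Prop :=
  ∃ (eL : G'.L ≃ {l : G.L // l ∉ T})
    (eB : G'.NB ≃ {x : G.NB // ∀ l ∈ T, G.lb l ≠ x})
    (eW : G'.NW ≃ {y : G.NW // ∀ l ∈ T, G.lw l ≠ y}),
    (∀ l' : G'.L,
      (eB (G'.lb l')).1 = G.lb (eL l').1 ∧ (eW (G'.lw l')).1 = G.lw (eL l').1) ∧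
    ∀ (i : Fin 4) (x : G'.NB),
      (eW (G'.colorMap i x)).1 = G.reroute T i T.card (G.colorMap i (eB x).1)

/-- `G'` is the Feynman graph obtained from `G` by contracting the 0-line `l`. -/
def FGraph.IsContractionAt (G' G : FGraph) (l : G.L) : Prop :=
  FGraph.IsQuotientBy G' G {l}

/-- The 0-line `l` is a `k`-dipole: its two end nodes are joined by exactly
`k - 1` colored lines. -/
def FGraph.IsDipoleLine (G : FGraph) (l : G.L) (k : ℕ) : Prop :=
  (Finset.univ.filter fun i : Fin 4 => G.colorMap i (G.lb l) = G.lw l).card = k - 1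

/-- A Feynman graph is 3-dipole contractible if its 0-lines can be contracted
one after the other, each being a 3-dipole at the moment of its contraction. -/
inductive DipoleContractible : FGraph → Prop
  | nil {G : FGraph} : Fintype.card G.L = 0 → DipoleContractible G
  | step {G G' : FGraph} (l : G.L) : G.IsDipoleLine l 3 →
      FGraph.IsContractionAt G' G l → DipoleContractible G' → DipoleContractible G

/-- A necklace graph: a connected Feynman graph all of whose vertices are
necklace bubbles. -/
def FGraph.IsNecklaceGraph (G : FGraph) : Prop :=
  G.Connected ∧ ∀ v : G.V, IsNecklace (G.bub v)

/-- `r ∈ ℛ₂(b)`: a Feynman graph with a single vertex `b` and exactly two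
external legs. -/
def IsR2 (r : FGraph) (b : Bubble) : Prop :=
  Fintype.card r.V = 1 ∧ (∀ v : r.V, (r.bub v).Iso b) ∧ r.numN = 2

/-- `M = max_{r ∈ ℛ₂(b)} ω(r)`. -/
def IsMaxOmega2 (b : Bubble) (M : ℤ) : Prop :=
  (∃ r : FGraph, IsR2 r b ∧ r.omega = M) ∧ ∀ r : FGraph, IsR2 r b → r.omega ≤ M

/-- The bubble dimension `d̃_b = 2 - max_{r ∈ ℛ₂(b)} ω(r)`. -/
def HasBubbleDim (b : Bubble) (d : ℤ) : Prop :=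
  ∃ M : ℤ, IsMaxOmega2 b M ∧ d = 2 - M

open Classical in
/-- The (unique, if any) successor of the 0-line `l` in the face of color `i`. -/
noncomputable def FGraph.nextL (G : FGraph) (i : Fin 4) (l : G.L) : Option G.L :=
  if h : ∃ l' : G.L, G.NextRel i l l' then some h.choose else none

/-- The ordered product of the group elements attached to the `k` consecutive
0-lines of the face of color `i` starting at `l`. -/
noncomputable def FGraph.holPath (G : FGraph) {Γ : Type*} [Monoid Γ]
    (h : G.L → Γ) (i : Fin 4) : ℕ → G.L → Γ
  | 0, _ => 1
  | k + 1, l => h l * (G.nextL i l).elim 1 (fun l' => FGraph.holPath G h i k l')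


/-! ### Auxiliary development for `melon4_bubbleDim` -/

private instance (r : FGraph) (i : Fin 4) (l l' : r.L) : Decidable (r.NextRel i l l') :=
  inferInstanceAs (Decidable (r.lw l' = r.colorMap i (r.lb l)))

private lemma sigma_eq_of_fst_eq {V : Type} {W : V → Type} (s : Σ v, W v) (v : V)
    (h : s.1 = v) : s = ⟨v, h ▸ s.2⟩ := by cases s; cases h; rfl

/-- Characterization of faces in a graph with a single 0-line. -/
private lemma face_iff (r : FGraph) (l₀ : r.L) (hL : ∀ l : r.L, l = l₀) (i : Fin 4)
    (C : Finset r.L) : r.IsFace i C ↔ (C = {l₀} ∧ r.NextRel i l₀ l₀) := by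
  constructor
  · rintro ⟨⟨l, hl⟩, hsucc, _⟩
    have hC : C = {l₀} :=
      Finset.eq_singleton_iff_unique_mem.mpr ⟨hL l ▸ hl, fun x _ => hL x⟩
    refine ⟨hC, ?_⟩
    obtain ⟨l', _, hnext⟩ := hsucc l₀ (hC ▸ Finset.mem_singleton_self l₀)
    rwa [hL l'] at hnext
  · rintro ⟨rfl, hnext⟩
    refine ⟨⟨l₀, Finset.mem_singleton_self l₀⟩, ?_, ?_⟩
    · intro l hl
      exact ⟨l₀, Finset.mem_singleton_self l₀, by rwa [Finset.mem_singleton.mp hl]⟩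
    · intro D hD hne _
      obtain ⟨d, hd⟩ := hne
      exact Finset.eq_singleton_iff_unique_mem.mpr
        ⟨Finset.mem_singleton.mp (hD hd) ▸ hd, fun x hx => Finset.mem_singleton.mp (hD hx)⟩

private lemma numF_eq (r : FGraph) (l₀ : r.L) (hL : ∀ l : r.L, l = l₀) :
    r.numF = (univ.filter fun i : Fin 4 => r.NextRel i l₀ l₀).card := by
  classical
  have hS : {p : Fin 4 × Finset r.L | r.IsFace p.1 p.2}
      = (fun i => (i, ({l₀} : Finset r.L))) '' {i | r.NextRel i l₀ l₀} := by
    ext ⟨i, C⟩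
    simp only [Set.mem_setOf_eq, face_iff r l₀ hL, Set.mem_image]
    constructor
    · rintro ⟨rfl, h⟩; exact ⟨i, h, rfl⟩
    · rintro ⟨j, hj, hji⟩
      simp only [Prod.mk.injEq] at hji
      obtain ⟨rfl, rfl⟩ := hji
      exact ⟨rfl, hj⟩
  have hinj : Function.Injective (fun i : Fin 4 => (i, ({l₀} : Finset r.L))) :=
    fun a b hab => congrArg Prod.fst hab
  have hcoe : {i : Fin 4 | r.NextRel i l₀ l₀}
      = ↑(univ.filter fun i : Fin 4 => r.NextRel i l₀ l₀) := by
    ext i; simp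
  rw [FGraph.numF, hS, Set.ncard_image_of_injective _ hinj, hcoe, Set.ncard_coe_finset]

private lemma numR_eq (r : FGraph) (l₀ : r.L) (hL : ∀ l : r.L, l = l₀) (i₀ : Fin 4)
    (hface : r.IsFace i₀ {l₀}) : r.numR = 1 := by
  classical
  have hcardL : Fintype.card r.L = 1 := Fintype.card_eq_one_iff.mpr ⟨l₀, hL⟩
  have hle : r.numR ≤ 1 := by
    have h := Matrix.rank_le_card_height r.epsMat
    rwa [hcardL] at h
  have hge : 1 ≤ r.numR := by
    have hmem : (fun l : r.L => r.epsMat l (i₀, {l₀}))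
        ∈ LinearMap.range r.epsMat.mulVecLin := by
      refine ⟨Pi.single (i₀, {l₀}) 1, ?_⟩
      rw [Matrix.mulVecLin_apply, Matrix.mulVec_single]
      simp
      rfl
    have hne : (fun l : r.L => r.epsMat l (i₀, {l₀})) ≠ 0 := by
      intro h0
      have h1 := congrFun h0 l₀
      simp only [FGraph.epsMat, Pi.zero_apply] at h1
      rw [if_pos ⟨hface, Finset.mem_singleton_self l₀⟩] at h1
      exact one_ne_zero h1
    have hnt : Nontrivial (LinearMap.range r.epsMat.mulVecLin) :=
      ⟨⟨⟨_, hmem⟩, 0, fun hc => hne (congrArg Subtype.val hc)⟩⟩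
    exact Module.finrank_pos_iff.mpr hnt
  omega

/-- The `ω`-formula for a graph with a single vertex and a single 0-line. -/
private lemma omega_eq (r : FGraph) (l₀ : r.L) (hL : ∀ l : r.L, l = l₀)
    (hex : ∃ i : Fin 4, r.NextRel i l₀ l₀) :
    r.omega = -2 + 3 * (((univ.filter fun i : Fin 4 => r.NextRel i l₀ l₀).card : ℤ) - 1) := by
  classical
  obtain ⟨i₀, hi₀⟩ := hex
  have hface : r.IsFace i₀ {l₀} := (face_iff r l₀ hL i₀ {l₀}).mpr ⟨rfl, hi₀⟩
  have hL1 : r.numL = 1 := Fintype.card_eq_one_iff.mpr ⟨l₀, hL⟩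
  rw [FGraph.omega, hL1, numF_eq r l₀ hL, numR_eq r l₀ hL i₀ hface]
  push_cast
  ring

/-- `NextRel i l₀ l₀` rewritten as an equation inside the bubble. -/
private lemma nextRel_iff (r : FGraph) (l₀ : r.L) [Subsingleton r.V] (i : Fin 4) :
    r.NextRel i l₀ l₀ ↔
      (Subsingleton.elim (r.lw l₀).1 (r.lb l₀).1 ▸ (r.lw l₀).2 : (r.bub (r.lb l₀).1).W)
        = (r.bub (r.lb l₀).1).edge i (r.lb l₀).2 := by
  have hlw : r.lw l₀ = ⟨(r.lb l₀).1,
      Subsingleton.elim (r.lw l₀).1 (r.lb l₀).1 ▸ (r.lw l₀).2⟩ :=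
    sigma_eq_of_fst_eq _ _ (Subsingleton.elim _ _)
  rw [FGraph.NextRel, FGraph.colorMap]
  constructor
  · intro h
    rw [hlw] at h
    simpa [Sigma.ext_iff] using h
  · intro h
    rw [hlw]
    simp [Sigma.ext_iff, h]

private instance (ℓ : Fin 4) (a b : Fin 2) :
    DecidablePred fun i : Fin 4 => (melon4 ℓ).edge i a = b := fun _ => Bubble.dW _ _ _

private lemma melon4_count_bound (ℓ : Fin 4) (a : Fin 2) (b : Fin 2) :
    1 ≤ (univ.filter fun i : Fin 4 => (melon4 ℓ).edge i a = b).card ∧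
      (univ.filter fun i : Fin 4 => (melon4 ℓ).edge i a = b).card ≤ 3 := by
  fin_cases ℓ <;> fin_cases a <;> fin_cases b <;> decide

private lemma melon4_count_eq (ℓ : Fin 4) (a : Fin 2) :
    (univ.filter fun i : Fin 4 => (melon4 ℓ).edge i a = a).card = 3 := by
  fin_cases ℓ <;> fin_cases a <;> decide

/-- In an `ℛ₂` graph, the number of 0-lines is 1. -/
private lemma R2_card_L (r : FGraph) (b : Bubble) (hB : Fintype.card b.B = 2)
    (hW : Fintype.card b.W = 2) (hr : IsR2 r b) : Fintype.card r.L = 1 := by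
  classical
  obtain ⟨hV, hiso, hN⟩ := hr
  have hNB : Fintype.card r.NB = 2 := by
    rw [Fintype.card_sigma]
    have hb : ∀ v : r.V, Fintype.card (r.bub v).B = 2 := by
      intro v
      obtain ⟨eB, _, _⟩ := hiso v
      rw [Fintype.card_congr eB, hB]
    calc ∑ v : r.V, Fintype.card (r.bub v).B = ∑ _v : r.V, 2 := by
          exact Finset.sum_congr rfl fun v _ => hb v
      _ = Fintype.card r.V * 2 := by rw [Finset.sum_const, smul_eq_mul, Finset.card_univ]
      _ = 2 := by rw [hV]
  have hNW : Fintype.card r.NW = 2 := by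
    rw [Fintype.card_sigma]
    have hb : ∀ v : r.V, Fintype.card (r.bub v).W = 2 := by
      intro v
      obtain ⟨_, eW, _⟩ := hiso v
      rw [Fintype.card_congr eW, hW]
    calc ∑ v : r.V, Fintype.card (r.bub v).W = ∑ _v : r.V, 2 := by
          exact Finset.sum_congr rfl fun v _ => hb v
      _ = Fintype.card r.V * 2 := by rw [Finset.sum_const, smul_eq_mul, Finset.card_univ]
      _ = 2 := by rw [hV]
  have hle : Fintype.card r.L ≤ 2 := hNB ▸ Fintype.card_le_of_injective r.lb r.lb_inj
  rw [FGraph.numN, hNB, hNW] at hN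
  omega

/-- The tadpole graph on the melonic bubble realizing `ω = 4`. -/
private def melonTadpole (ℓ : Fin 4) : FGraph where
  V := PUnit
  bub := fun _ => melon4 ℓ
  L := PUnit
  lb := fun _ => ⟨PUnit.unit, (0 : Fin 2)⟩
  lw := fun _ => ⟨PUnit.unit, (0 : Fin 2)⟩
  lb_inj := fun a b _ => Subsingleton.elim a b
  lw_inj := fun a b _ => Subsingleton.elim a b

/-- Each 4-valent melonic bubble has `max_{r ∈ ℛ₂} ω(r) = 4`, i.e. bubble
dimension `d̃ = -2`. -/
theorem melon4_bubbleDim (ℓ : Fin 4) :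
    IsMaxOmega2 (melon4 ℓ) 4 ∧ HasBubbleDim (melon4 ℓ) (-2) := by
  classical
  have hmax : IsMaxOmega2 (melon4 ℓ) 4 := by
    constructor
    · -- witness: the tadpole
      refine ⟨melonTadpole ℓ, ⟨?_, ?_, ?_⟩, ?_⟩
      · simp [melonTadpole]
        rfl
      · intro v
        exact ⟨Equiv.refl _, Equiv.refl _, fun _ _ => rfl⟩
      · rfl
      · have hL : ∀ l : (melonTadpole ℓ).L, l = PUnit.unit := fun _ => rfl
        haveI : Subsingleton (melonTadpole ℓ).V := inferInstanceAs (Subsingleton PUnit)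
        have hcount : ∀ i : Fin 4, ((melonTadpole ℓ).NextRel i PUnit.unit PUnit.unit ↔
            (melon4 ℓ).edge i (0 : Fin 2) = (0 : Fin 2)) := by
          intro i
          rw [nextRel_iff (melonTadpole ℓ) PUnit.unit i]
          constructor
          · intro h; exact h.symm
          · intro h; exact h.symm
        have hfilter : (univ.filter fun i : Fin 4 =>
            (melonTadpole ℓ).NextRel i PUnit.unit PUnit.unit)
            = (univ.filter fun i : Fin 4 => (melon4 ℓ).edge i (0 : Fin 2) = (0 : Fin 2)) := by
          apply Finset.filter_congr
          intro i _
          exact hcount i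
        have h3 := melon4_count_eq ℓ (0 : Fin 2)
        have hex : ∃ i : Fin 4, (melonTadpole ℓ).NextRel i PUnit.unit PUnit.unit := by
          have hpos : 0 < (univ.filter fun i : Fin 4 =>
              (melonTadpole ℓ).NextRel i PUnit.unit PUnit.unit).card := by
            rw [hfilter, h3]; norm_num
          obtain ⟨i, hi⟩ := Finset.card_pos.mp hpos
          exact ⟨i, (Finset.mem_filter.mp hi).2⟩
        have h4 : (-2 : ℤ) + 3 * (((univ.filter fun i : Fin 4 =>
            (melonTadpole ℓ).NextRel i PUnit.unit PUnit.unit).card : ℤ) - 1) = 4 := by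
          rw [hfilter, h3]; norm_num
        rw [omega_eq (melonTadpole ℓ) PUnit.unit hL hex]
        convert h4
    · -- upper bound
      intro r hr
      have hcardL : Fintype.card r.L = 1 := R2_card_L r (melon4 ℓ) rfl rfl hr
      obtain ⟨l₀, hL⟩ := Fintype.card_eq_one_iff.mp hcardL
      haveI : Subsingleton r.V :=
        Fintype.card_le_one_iff_subsingleton.mp (le_of_eq hr.1)
      obtain ⟨eB, eW, he⟩ := hr.2.1 (r.lb l₀).1
      set x : (r.bub (r.lb l₀).1).B := (r.lb l₀).2 with hx
      set y : (r.bub (r.lb l₀).1).W :=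
        Subsingleton.elim (r.lw l₀).1 (r.lb l₀).1 ▸ (r.lw l₀).2 with hy
      have hbridge : ∀ i : Fin 4,
          (r.NextRel i l₀ l₀ ↔ (melon4 ℓ).edge i (eB x) = eW y) := by
        intro i
        rw [nextRel_iff r l₀ i]
        constructor
        · intro h
          rw [← he i x, ← h]
        · intro h
          apply eW.injective
          rw [he i x, h]
      have hfilter : (univ.filter fun i : Fin 4 => r.NextRel i l₀ l₀)
          = (univ.filter fun i : Fin 4 => (melon4 ℓ).edge i (eB x) = eW y) := by
        apply Finset.filter_congr
        intro i _
        exact hbridge i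
      obtain ⟨hge, hle⟩ := melon4_count_bound ℓ (eB x) (eW y)
      have hex : ∃ i : Fin 4, r.NextRel i l₀ l₀ := by
        have hpos : 0 < (univ.filter fun i : Fin 4 => r.NextRel i l₀ l₀).card := by
          rw [hfilter]; omega
        obtain ⟨i, hi⟩ := Finset.card_pos.mp hpos
        exact ⟨i, (Finset.mem_filter.mp hi).2⟩
      rw [omega_eq r l₀ hL hex, hfilter]
      have : ((univ.filter fun i : Fin 4 => (melon4 ℓ).edge i (eB x) = eW y).card : ℤ) ≤ 3 := by
        exact_mod_cast hle
      omega
  exact ⟨hmax, 4, hmax, by norm_num⟩
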